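/- Let f : [0, ∞) → ℝ be a continuous convex function, let M > 0 be a scalar, and let B_1,…,B_n be positive operators in B(H) with Σ_{i=1}^n B_i = M·I. Then Σ_i f(B_i) ≤ f(Σ_i B_i) + (n−1)·f(0)·I − δ_f · B̃ ≤ f(Σ_i B_i) + (n−1)·f(0)·I, where δ_f = f(0) + f(M) − 2 f(M/2) and B̃ = (n/2)·I − Σ_i |(1/M)·B_i − (1/2)·I|. -/

import Mathlib

noncomputable def opAbs {H : Type*} [NormedAddCommGroup H] [InnerProductSpace ℂ H]
    [CompleteSpace H] (A : H →L[ℂ] H) : H →L[ℂ] H :=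
  cfc (fun t : ℝ => |t|) A

lemma scalar_key (f : ℝ → ℝ) (hconv : ConvexOn ℝ (Set.Ici 0) f) {M : ℝ} (hM : 0 < M)
    {x : ℝ} (hx0 : 0 ≤ x) (hxM : x ≤ M) :
    f x ≤ ((f M - f 0) / M) * x + f 0 -
      (f 0 + f M - 2 * f (M / 2)) * (1 / 2 - |M⁻¹ * x - 1 / 2|) := by
  set t : ℝ := x / M with ht
  have hxt : x = t * M := by rw [ht, div_mul_cancel₀ x hM.ne']
  have hMx : M⁻¹ * x = t := by rw [ht, inv_mul_eq_div]
  have ht0 : 0 ≤ t := div_nonneg hx0 hM.le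
  have ht1 : t ≤ 1 := by rw [ht, div_le_one hM]; exact hxM
  have hc : ((f M - f 0) / M) * x = (f M - f 0) * t := by
    rw [hxt]; field_simp
  rw [hc, hMx]
  rcases le_or_gt t (1/2) with h | h
  · have habs : |t - 1/2| = 1/2 - t := by rw [abs_of_nonpos (by linarith)]; ring
    have hcv := hconv.2 (Set.self_mem_Ici) (Set.mem_Ici.mpr (by positivity : (0:ℝ) ≤ M/2))
      (by linarith : (0:ℝ) ≤ 1 - 2*t) (by linarith : (0:ℝ) ≤ 2*t) (by ring)
    rw [smul_eq_mul, smul_eq_mul, smul_eq_mul, smul_eq_mul] at hcv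
    have harg : (1 - 2*t) * 0 + 2*t * (M/2) = x := by rw [hxt]; ring
    rw [harg] at hcv
    rw [habs]; nlinarith [hcv]
  · have habs : |t - 1/2| = t - 1/2 := abs_of_pos (by linarith)
    have hcv := hconv.2 (Set.mem_Ici.mpr (by positivity : (0:ℝ) ≤ M/2))
      (Set.mem_Ici.mpr hM.le)
      (by linarith : (0:ℝ) ≤ 2 - 2*t) (by linarith : (0:ℝ) ≤ 2*t - 1) (by ring)
    rw [smul_eq_mul, smul_eq_mul, smul_eq_mul, smul_eq_mul] at hcv
    have harg : (2 - 2*t) * (M/2) + (2*t - 1) * M = x := by rw [hxt]; ring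
    rw [harg] at hcv
    rw [habs]; nlinarith [hcv]

set_option synthInstance.maxHeartbeats 1000000 in
set_option maxHeartbeats 1000000 in
theorem petrovic_refined {H : Type*} [NormedAddCommGroup H] [InnerProductSpace ℂ H]
    [CompleteSpace H] {n : ℕ} (f : ℝ → ℝ) (hf : ContinuousOn f (Set.Ici 0))
    (hconv : ConvexOn ℝ (Set.Ici 0) f) (M : ℝ) (hM : 0 < M)
    (B : Fin n → H →L[ℂ] H) (hBpos : ∀ i, 0 ≤ B i)
    (hBsum : ∑ i, B i = M • (1 : H →L[ℂ] H)) :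
    ∑ i, cfc f (B i) ≤
        cfc f (∑ i, B i) + (((n : ℝ) - 1) * f 0) • (1 : H →L[ℂ] H) -
          (f 0 + f M - 2 * f (M / 2)) •
            (((n : ℝ) / 2) • (1 : H →L[ℂ] H) -
              ∑ i, opAbs (M⁻¹ • B i - (1 / 2 : ℝ) • 1)) ∧
      cfc f (∑ i, B i) + (((n : ℝ) - 1) * f 0) • (1 : H →L[ℂ] H) -
          (f 0 + f M - 2 * f (M / 2)) •
            (((n : ℝ) / 2) • (1 : H →L[ℂ] H) -
              ∑ i, opAbs (M⁻¹ • B i - (1 / 2 : ℝ) • 1)) ≤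
        cfc f (∑ i, B i) + (((n : ℝ) - 1) * f 0) • (1 : H →L[ℂ] H) := by
  set δ : ℝ := f 0 + f M - 2 * f (M / 2) with hδ
  set c : ℝ := (f M - f 0) / M with hcdef
  have hsa : ∀ i, IsSelfAdjoint (B i) := fun i => .of_nonneg (hBpos i)
  -- each B i ≤ M • 1
  have hBle : ∀ i, B i ≤ M • (1 : H →L[ℂ] H) := by
    intro i
    rw [← hBsum]
    exact Finset.single_le_sum (f := fun j => B j) (fun j _ => hBpos j) (Finset.mem_univ i)
  -- spectrum bounds
  have hspec : ∀ i, spectrum ℝ (B i) ⊆ Set.Icc 0 M := by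
    intro i x hx
    refine ⟨spectrum_nonneg_of_nonneg (hBpos i) hx, ?_⟩
    have hle : B i ≤ algebraMap ℝ (H →L[ℂ] H) M := by
      rw [Algebra.algebraMap_eq_smul_one]; exact hBle i
    exact (le_algebraMap_iff_spectrum_le (hsa i)).mp hle x hx
  -- opAbs as cfc of B i
  have hT : ∀ i, opAbs (M⁻¹ • B i - (1/2 : ℝ) • 1)
      = cfc (fun x : ℝ => |M⁻¹ * x - 1/2|) (B i) := by
    intro i
    have h : M⁻¹ • B i - (1/2 : ℝ) • 1 = cfc (fun x : ℝ => M⁻¹ * x - 1/2) (B i) := by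
      rw [cfc_sub (fun x : ℝ => M⁻¹ * x) (fun _ : ℝ => (1/2 : ℝ)) (B i),
        cfc_const_mul_id M⁻¹ (B i) (hsa i), cfc_const (1/2 : ℝ) (B i) (hsa i),
        Algebra.algebraMap_eq_smul_one]
    rw [opAbs, h,
      ← cfc_comp' (fun t : ℝ => |t|) (fun x : ℝ => M⁻¹ * x - 1/2) (B i) (by fun_prop) (by fun_prop)]
  -- the per-operator bound
  have hmain : ∀ i, cfc f (B i) ≤ c • B i + (f 0) • (1 : H →L[ℂ] H) -
      δ • ((1/2 : ℝ) • 1 - opAbs (M⁻¹ • B i - (1/2 : ℝ) • 1)) := by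
    intro i
    have hrhs : c • B i + (f 0) • (1 : H →L[ℂ] H) -
        δ • ((1/2 : ℝ) • 1 - opAbs (M⁻¹ • B i - (1/2 : ℝ) • 1))
        = cfc (fun x : ℝ => c * x + f 0 - δ * (1/2 - |M⁻¹ * x - 1/2|)) (B i) := by
      rw [hT i,
        cfc_sub (fun x : ℝ => c * x + f 0) (fun x : ℝ => δ * (1/2 - |M⁻¹ * x - 1/2|)) (B i)
          (by fun_prop) (by fun_prop),
        cfc_add (a := B i) (fun x : ℝ => c * x) (fun _ : ℝ => f 0) (by fun_prop) (by fun_prop),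
        cfc_const_mul_id c (B i) (hsa i), cfc_const (f 0) (B i) (hsa i),
        cfc_const_mul δ (fun x : ℝ => (1/2 - |M⁻¹ * x - 1/2|)) (B i) (by fun_prop),
        cfc_sub (fun _ : ℝ => (1/2 : ℝ)) (fun x : ℝ => |M⁻¹ * x - 1/2|) (B i)
          (by fun_prop) (by fun_prop),
        cfc_const (1/2 : ℝ) (B i) (hsa i), Algebra.algebraMap_eq_smul_one]
      simp [Algebra.algebraMap_eq_smul_one]
    rw [hrhs]
    refine cfc_mono (fun x hx => ?_) ?_ (by fun_prop)
    · obtain ⟨hx0, hxM⟩ := hspec i hx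
      exact scalar_key f hconv hM hx0 hxM
    · exact hf.mono ((hspec i).trans (fun x hx => hx.1))
  -- each abs term is ≤ (1/2) • 1
  have hTle : ∀ i, opAbs (M⁻¹ • B i - (1/2 : ℝ) • 1) ≤ (1/2 : ℝ) • (1 : H →L[ℂ] H) := by
    intro i
    rw [hT i, ← Algebra.algebraMap_eq_smul_one]
    rw [cfc_le_algebraMap_iff (fun x : ℝ => |M⁻¹ * x - 1/2|) (1/2 : ℝ) (B i) (by fun_prop) (hsa i)]
    intro x hx
    obtain ⟨hx0, hxM⟩ := hspec i hx
    rw [abs_le]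
    constructor
    · have : 0 ≤ M⁻¹ * x := by positivity
      linarith
    · have : M⁻¹ * x ≤ 1 := by
        rw [inv_mul_le_iff₀ hM]; linarith
      linarith
  have hδ0 : 0 ≤ δ := by
    have hcv := hconv.2 (Set.self_mem_Ici) (Set.mem_Ici.mpr hM.le)
      (by norm_num : (0:ℝ) ≤ (1:ℝ)/2) (by norm_num : (0:ℝ) ≤ (1:ℝ)/2) (by norm_num)
    rw [smul_eq_mul, smul_eq_mul, smul_eq_mul, smul_eq_mul] at hcv
    have : (1:ℝ)/2 * 0 + 1/2 * M = M / 2 := by ring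
    rw [this] at hcv
    rw [hδ]; linarith
  have hBtilde : (0 : H →L[ℂ] H) ≤ ((n : ℝ) / 2) • (1 : H →L[ℂ] H) -
      ∑ i, opAbs (M⁻¹ • B i - (1/2 : ℝ) • 1) := by
    rw [sub_nonneg]
    calc ∑ i, opAbs (M⁻¹ • B i - (1/2 : ℝ) • 1)
        ≤ ∑ _i : Fin n, (1/2 : ℝ) • (1 : H →L[ℂ] H) := Finset.sum_le_sum fun i _ => hTle i
      _ = ((n : ℝ) / 2) • (1 : H →L[ℂ] H) := by
          rw [Finset.sum_const, Finset.card_univ, Fintype.card_fin,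
            ← Nat.cast_smul_eq_nsmul ℝ, smul_smul]
          congr 1; ring
  constructor
  · calc ∑ i, cfc f (B i)
        ≤ ∑ i, (c • B i + (f 0) • (1 : H →L[ℂ] H) -
            δ • ((1/2 : ℝ) • 1 - opAbs (M⁻¹ • B i - (1/2 : ℝ) • 1))) :=
          Finset.sum_le_sum fun i _ => hmain i
      _ = cfc f (∑ i, B i) + (((n : ℝ) - 1) * f 0) • (1 : H →L[ℂ] H) -
          δ • (((n : ℝ) / 2) • (1 : H →L[ℂ] H) -
            ∑ i, opAbs (M⁻¹ • B i - (1/2 : ℝ) • 1)) := by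
          have hcfc : cfc f (M • (1 : H →L[ℂ] H)) = (f M) • (1 : H →L[ℂ] H) := by
            rw [← Algebra.algebraMap_eq_smul_one, cfc_algebraMap,
              Algebra.algebraMap_eq_smul_one]
          have hcM : c • M • (1 : H →L[ℂ] H) = (f M - f 0) • (1 : H →L[ℂ] H) := by
            rw [smul_smul, hcdef]; congr 1; field_simp
          simp only [Finset.sum_sub_distrib, Finset.sum_add_distrib, ← Finset.smul_sum,
            hBsum, Finset.sum_const, Finset.card_univ, Fintype.card_fin, hcfc, hcM,
            ← Nat.cast_smul_eq_nsmul ℝ, smul_smul]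
          match_scalars <;> push_cast <;> ring
  · apply sub_le_self
    exact smul_nonneg hδ0 hBtilde
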